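/- Let 0 < p, q ≤ ∞. Then the differentiation operator D f = f' is unbounded from the classical Fock space F_p to F_q: there is no constant C > 0 such that every entire function f with ‖f‖_{F_p} < ∞ satisfies ‖f'‖_{F_q} ≤ C‖f‖_{F_p}. -/

import Mathlib

open MeasureTheory Filter Topology Metric
open scoped ENNReal

noncomputable section

/-- The radial extension of a weight `ψ : ℝ → ℝ` to the complex plane. -/
def rext (ψ : ℝ → ℝ) (z : ℂ) : ℝ := ψ (‖z‖)

/-- The Laplacian of the radial extension of `ψ`, via the radial formula
`Δψ(z) = ψ''(|z|) + ψ'(|z|)/|z|`. -/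
def lapPsi (ψ : ℝ → ℝ) (z : ℂ) : ℝ :=
  deriv (deriv ψ) (‖z‖) + deriv ψ (‖z‖) / ‖z‖

/-- The admissibility conditions imposed on the weight `ψ` and the associated function `τ`. -/
structure Admissible (ψ τ : ℝ → ℝ) : Prop where
  smooth : ContDiffOn ℝ 2 ψ (Set.Ici 0)
  nonneg : ∀ r : ℝ, 0 ≤ r → 0 ≤ ψ r
  lap_pos : ∀ z : ℂ, 0 < lapPsi ψ z
  fast : Tendsto (fun r => ψ r / r ^ 2) atTop atTop
  tau_pos : ∀ r : ℝ, 0 ≤ r → 0 < τ r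
  tau_diff : ∀ r : ℝ, 0 ≤ r → DifferentiableAt ℝ τ r
  tau_one : ∃ c₁ > (0:ℝ), ∃ c₂ > (0:ℝ), ∀ z : ℂ, ‖z‖ < 1 →
      c₁ ≤ τ (‖z‖) ∧ τ (‖z‖) ≤ c₂
  tau_lap : ∃ c₁ > (0:ℝ), ∃ c₂ > (0:ℝ), ∀ z : ℂ, 1 ≤ ‖z‖ →
      c₁ * lapPsi ψ z ^ (-(1:ℝ)/2) ≤ τ (‖z‖) ∧
      τ (‖z‖) ≤ c₂ * lapPsi ψ z ^ (-(1:ℝ)/2)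
  tau_lim : Tendsto τ atTop (𝓝 0)
  tau_deriv_lim : Tendsto (deriv τ) atTop (𝓝 0)
  tau_extra : (∃ C > (0:ℝ), ∃ r₀ : ℝ, ∀ r s : ℝ, r₀ ≤ r → r ≤ s → τ r * r ^ C ≤ τ s * s ^ C) ∨
      Tendsto (fun r => deriv τ r * Real.log (1 / τ r)) atTop (𝓝 0)

/-- The (extended-real-valued) norm of the generalized Fock space `F_p^ψ`, `0 < p ≤ ∞`. -/
def fockNorm (ψ : ℝ → ℝ) (p : ℝ≥0∞) (f : ℂ → ℂ) : ℝ≥0∞ :=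
  if p = ∞ then ⨆ z : ℂ, ENNReal.ofReal (‖f z‖ * Real.exp (-(rext ψ z)))
  else (∫⁻ z : ℂ, ENNReal.ofReal
      (‖f z‖ ^ p.toReal * Real.exp (-(p.toReal * rext ψ z)))) ^ (1 / p.toReal)

/-- The Volterra-type integral operator `V_g f (z) = ∫_0^z f(w) g'(w) dw`. -/
def Vop (g f : ℂ → ℂ) (z : ℂ) : ℂ :=
  z * ∫ t in (0:ℝ)..1, f ((t : ℂ) * z) * deriv g ((t : ℂ) * z)

/-- The Volterra companion integral operator `I_g f (z) = ∫_0^z f'(w) g(w) dw`. -/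
def Iop (g f : ℂ → ℂ) (z : ℂ) : ℂ :=
  z * ∫ t in (0:ℝ)..1, deriv f ((t : ℂ) * z) * g ((t : ℂ) * z)

/-- The multiplication operator `M_g f = g · f`. -/
def Mop (g f : ℂ → ℂ) (z : ℂ) : ℂ := g z * f z

/-- Boundedness of an operator from `F_p^ψ` to `F_q^ψ`. -/
def BoundedOp (ψ : ℝ → ℝ) (p q : ℝ≥0∞) (T : (ℂ → ℂ) → ℂ → ℂ) : Prop :=
  ∃ C > (0:ℝ), ∀ f : ℂ → ℂ, Differentiable ℂ f → fockNorm ψ p f < ∞ →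
    fockNorm ψ q (T f) ≤ ENNReal.ofReal C * fockNorm ψ p f

/-- Compactness of an operator from `F_p^ψ` to `F_q^ψ`: `‖T f_n‖ → 0` for every uniformly
norm-bounded sequence in `F_p^ψ` converging to `0` uniformly on compact subsets of `ℂ`. -/
def CompactOp (ψ : ℝ → ℝ) (p q : ℝ≥0∞) (T : (ℂ → ℂ) → ℂ → ℂ) : Prop :=
  ∀ F : ℕ → ℂ → ℂ, (∀ n, Differentiable ℂ (F n)) →
    (∃ M : ℝ≥0∞, M < ∞ ∧ ∀ n, fockNorm ψ p (F n) ≤ M) →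
    (∀ K : Set ℂ, IsCompact K → TendstoUniformlyOn (fun n => F n) 0 atTop K) →
    Tendsto (fun n => fockNorm ψ q (T (F n))) atTop (𝓝 0)

lemma key_identity (t : ℝ) (z : ℂ) :
    ‖Complex.exp (t * z)‖ * Real.exp (-(‖z‖ ^ 2 / 2)) =
      Real.exp (t ^ 2 / 2) * Real.exp (-(‖z - t‖ ^ 2 / 2)) := by
  rw [Complex.norm_exp, ← Real.exp_add, ← Real.exp_add]
  congr 1
  have h1 : (‖z‖) ^ 2 = z.re ^ 2 + z.im ^ 2 := by
    rw [Complex.sq_norm, Complex.normSq_apply]; ring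
  have h2 : (‖z - t‖) ^ 2 = (z.re - t) ^ 2 + z.im ^ 2 := by
    rw [Complex.sq_norm, Complex.normSq_apply]
    simp [Complex.sub_re, Complex.sub_im]; ring
  have h3 : ((t : ℂ) * z).re = t * z.re := by simp [Complex.mul_re]
  rw [h1, h2, h3]; ring

def GK (P : ℝ) : ℝ≥0∞ :=
  ∫⁻ z : ℂ, ENNReal.ofReal (Real.exp (-(‖z‖ ^ 2 / 2)) ^ P)

lemma GK_lt_top {P : ℝ} (hP : 0 < P) : GK P < ∞ := by
  have h0 := (GaussianFourier.integrable_cexp_neg_mul_sq_norm_add (V := ℂ)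
      (b := (P / 2 : ℂ)) (by simp [hP]) 0 0).norm
  have hi : Integrable (fun z : ℂ => Real.exp (-(‖z‖ ^ 2 / 2)) ^ P) := by
    refine h0.congr (Eventually.of_forall fun z => ?_)
    beta_reduce
    rw [Complex.norm_exp, ← Real.exp_mul]
    congr 1
    simp [Complex.mul_re, ← Complex.ofReal_pow]
    ring
  exact hi.lintegral_lt_top

lemma GK_pos {P : ℝ} : 0 < GK P := by
  have hcont : Continuous fun z : ℂ =>
      ENNReal.ofReal (Real.exp (-(‖z‖ ^ 2 / 2)) ^ P) := by
    apply ENNReal.continuous_ofReal.comp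
    apply Continuous.rpow_const
    · exact Real.continuous_exp.comp (by continuity)
    · intro z; left; positivity
  rw [GK, lintegral_pos_iff_support hcont.measurable]
  have hs : Function.support (fun z : ℂ =>
      ENNReal.ofReal (Real.exp (-(‖z‖ ^ 2 / 2)) ^ P)) = Set.univ := by
    ext z; simp only [Function.mem_support, Set.mem_univ, iff_true]
    positivity
  rw [hs]
  exact MeasureTheory.Measure.measure_univ_pos.mpr (NeZero.ne _)

lemma deriv_exp_lin (t : ℝ) :
    deriv (fun z : ℂ => Complex.exp (t * z)) = fun z => (t : ℂ) * Complex.exp (t * z) := by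
  funext z
  have h : HasDerivAt (fun z : ℂ => (t : ℂ) * z) (t : ℂ) z := by
    simpa using (hasDerivAt_id z).const_mul (t : ℂ)
  simpa [mul_comm] using h.cexp.deriv

/-- The constant `K_p` in `‖e^{tz}‖_{F_p} = e^{t²/2} K_p`. -/
def Kfun (p : ℝ≥0∞) : ℝ≥0∞ := if p = ∞ then 1 else GK p.toReal ^ (1 / p.toReal)

lemma Kfun_ne_zero {p : ℝ≥0∞} (hp : 0 < p) : Kfun p ≠ 0 := by
  rw [Kfun]
  split_ifs with h
  · simp
  · have hP : 0 < p.toReal := ENNReal.toReal_pos hp.ne' h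
    exact (ENNReal.rpow_pos GK_pos (GK_lt_top hP).ne).ne'

lemma Kfun_ne_top {p : ℝ≥0∞} (hp : 0 < p) : Kfun p ≠ ∞ := by
  rw [Kfun]
  split_ifs with h
  · simp
  · have hP : 0 < p.toReal := ENNReal.toReal_pos hp.ne' h
    exact ENNReal.rpow_ne_top_of_nonneg (by positivity) (GK_lt_top hP).ne

lemma rext_sq (z : ℂ) : rext (fun r : ℝ => r ^ 2 / 2) z = ‖z‖ ^ 2 / 2 := rfl

lemma fock_exp_eval (p : ℝ≥0∞) (hp : 0 < p) (t : ℝ) :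
    fockNorm (fun r => r ^ 2 / 2) p (fun z => Complex.exp (t * z)) =
      ENNReal.ofReal (Real.exp (t ^ 2 / 2)) * Kfun p := by
  by_cases htop : p = ∞
  · subst htop
    rw [fockNorm, if_pos rfl, Kfun, if_pos rfl, mul_one]
    apply le_antisymm
    · apply iSup_le; intro z
      rw [rext_sq, key_identity]
      apply ENNReal.ofReal_le_ofReal
      have h1 : Real.exp (-(‖z - t‖ ^ 2 / 2)) ≤ 1 := by
        exact Real.exp_le_one_iff.mpr (neg_nonpos.mpr (by positivity))
      nlinarith [Real.exp_pos (t ^ 2 / 2)]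
    · refine le_trans (le_of_eq ?_) (le_iSup _ (t : ℂ))
      rw [rext_sq, key_identity]
      simp
  · have hP : 0 < p.toReal := ENNReal.toReal_pos hp.ne' htop
    rw [fockNorm, if_neg htop, Kfun, if_neg htop]
    set P := p.toReal with hPdef
    have hpt : ∀ z : ℂ,
        ENNReal.ofReal (‖Complex.exp (t * z)‖ ^ P *
          Real.exp (-(P * rext (fun r : ℝ => r ^ 2 / 2) z)))
        = ENNReal.ofReal (Real.exp (t ^ 2 / 2) ^ P) *
          ENNReal.ofReal (Real.exp (-(‖z - t‖ ^ 2 / 2)) ^ P) := by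
      intro z
      rw [rext_sq, ← ENNReal.ofReal_mul (by positivity)]
      congr 1
      have he : Real.exp (-(P * (‖z‖ ^ 2 / 2))) =
          Real.exp (-(‖z‖ ^ 2 / 2)) ^ P := by
        rw [← Real.exp_mul]; ring_nf
      rw [he, ← Real.mul_rpow (by positivity) (by positivity), key_identity,
        Real.mul_rpow (by positivity) (by positivity)]
    simp_rw [hpt]
    rw [lintegral_const_mul' _ _ ENNReal.ofReal_ne_top]
    have htrans : ∫⁻ z : ℂ,
        ENNReal.ofReal (Real.exp (-(‖z - (t : ℂ)‖ ^ 2 / 2)) ^ P) = GK P :=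
      lintegral_sub_right_eq_self
        (fun z : ℂ => ENNReal.ofReal (Real.exp (-(‖z‖ ^ 2 / 2)) ^ P)) (t : ℂ)
    rw [htrans, ENNReal.mul_rpow_of_nonneg _ _ (by positivity)]
    congr 1
    rw [← ENNReal.ofReal_rpow_of_pos (Real.exp_pos _), ← ENNReal.rpow_mul,
      mul_one_div_cancel hP.ne', ENNReal.rpow_one]

lemma fock_smul_exp (q : ℝ≥0∞) (hq : 0 < q) {t : ℝ} (ht : 0 < t) :
    fockNorm (fun r => r ^ 2 / 2) q (fun z => (t : ℂ) * Complex.exp (t * z)) =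
      ENNReal.ofReal t * fockNorm (fun r => r ^ 2 / 2) q (fun z => Complex.exp (t * z)) := by
  by_cases htop : q = ∞
  · subst htop
    rw [fockNorm, if_pos rfl, fockNorm, if_pos rfl, ENNReal.mul_iSup]
    congr 1; funext z
    rw [norm_mul, Complex.norm_real, Real.norm_eq_abs, abs_of_pos ht, mul_assoc,
      ENNReal.ofReal_mul ht.le]
  · have hQ : 0 < q.toReal := ENNReal.toReal_pos hq.ne' htop
    rw [fockNorm, if_neg htop, fockNorm, if_neg htop]
    set Q := q.toReal with hQdef
    have hpt : ∀ z : ℂ,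
        ENNReal.ofReal (‖(t : ℂ) * Complex.exp (t * z)‖ ^ Q *
          Real.exp (-(Q * rext (fun r : ℝ => r ^ 2 / 2) z)))
        = ENNReal.ofReal (t ^ Q) *
          ENNReal.ofReal (‖Complex.exp (t * z)‖ ^ Q *
            Real.exp (-(Q * rext (fun r : ℝ => r ^ 2 / 2) z))) := by
      intro z
      rw [norm_mul, Complex.norm_real, Real.norm_eq_abs, abs_of_pos ht,
        Real.mul_rpow ht.le (by positivity), mul_assoc,
        ENNReal.ofReal_mul (by positivity)]
    simp_rw [hpt]
    rw [lintegral_const_mul' _ _ ENNReal.ofReal_ne_top,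
      ENNReal.mul_rpow_of_nonneg _ _ (by positivity)]
    congr 1
    rw [← ENNReal.ofReal_rpow_of_pos ht, ← ENNReal.rpow_mul,
      mul_one_div_cancel hQ.ne', ENNReal.rpow_one]

/-- for `0 < p, q ≤ ∞` the differentiation operator is unbounded from the
classical Fock space `F_p` (weight `e^{-|z|²/2}`) to `F_q`. -/
theorem differentiation_unbounded_classical (p q : ℝ≥0∞) (hp : 0 < p) (hq : 0 < q) :
    ¬ ∃ C > (0:ℝ), ∀ f : ℂ → ℂ, Differentiable ℂ f →
        fockNorm (fun r => r ^ 2 / 2) p f < ∞ →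
        fockNorm (fun r => r ^ 2 / 2) q (deriv f) ≤
          ENNReal.ofReal C * fockNorm (fun r => r ^ 2 / 2) p f := by
  rintro ⟨C, hC0, h⟩
  have key : ∀ t : ℝ, 0 < t →
      ENNReal.ofReal t * Kfun q ≤ ENNReal.ofReal C * Kfun p := by
    intro t ht
    have hdiff : Differentiable ℂ (fun z : ℂ => Complex.exp (t * z)) :=
      Complex.differentiable_exp.comp ((differentiable_id.const_mul ((t : ℂ))))
    have hfin : fockNorm (fun r => r ^ 2 / 2) p (fun z => Complex.exp (t * z)) < ∞ := by
      rw [fock_exp_eval p hp t]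
      exact ENNReal.mul_lt_top ENNReal.ofReal_lt_top (Kfun_ne_top hp).lt_top
    have hineq := h _ hdiff hfin
    rw [deriv_exp_lin t, fock_smul_exp q hq ht, fock_exp_eval q hq t,
      fock_exp_eval p hp t] at hineq
    have hE0 : ENNReal.ofReal (Real.exp (t ^ 2 / 2)) ≠ 0 := by
      simp [Real.exp_pos]
    have hrw : ENNReal.ofReal t * (ENNReal.ofReal (Real.exp (t ^ 2 / 2)) * Kfun q)
        = (ENNReal.ofReal t * Kfun q) * ENNReal.ofReal (Real.exp (t ^ 2 / 2)) := by ring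
    have hrw2 : ENNReal.ofReal C * (ENNReal.ofReal (Real.exp (t ^ 2 / 2)) * Kfun p)
        = (ENNReal.ofReal C * Kfun p) * ENNReal.ofReal (Real.exp (t ^ 2 / 2)) := by ring
    rw [hrw, hrw2] at hineq
    exact (ENNReal.mul_le_mul_iff_left hE0 ENNReal.ofReal_ne_top).mp hineq
  set D : ℝ≥0∞ := (ENNReal.ofReal C * Kfun p) / Kfun q with hD
  have hDtop : D ≠ ∞ := by
    rw [hD]
    exact (ENNReal.div_lt_top (ENNReal.mul_ne_top ENNReal.ofReal_ne_top (Kfun_ne_top hp))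
      (Kfun_ne_zero hq)).ne
  set t : ℝ := D.toReal + 1 with htdef
  have ht : 0 < t := by positivity
  have h1 : ENNReal.ofReal t ≤ D := by
    rw [hD]
    rw [ENNReal.le_div_iff_mul_le (Or.inl (Kfun_ne_zero hq)) (Or.inl (Kfun_ne_top hq))]
    exact key t ht
  have h2 : t ≤ D.toReal := by
    have := ENNReal.toReal_mono hDtop h1
    rwa [ENNReal.toReal_ofReal ht.le] at this
  linarith
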